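/- arXiv:2105.08152 — 2 statements merged into one kernel-verified Lean document; each statement's English description precedes it below -/
import Mathlib

section
/- A functor u : A → B over a discrete set I is a Set_ex-equivalence over I if there exist: a function s : ob(B) → ob(A); a function assigning to each morphism β : b → b' in B a zigzag in A from s(b) to s(b'); a function assigning to each b ∈ B a zigzag in B from b to u(s(b)); and a function assigning to each a ∈ A a zigzag in A from a to s(u(a)). Conversely, every Set_ex-equivalence over I admits such data. -/
open CategoryTheory Limits

universe w v u

namespace ExCompletion

variable (E : Type u) [Category.{v} E] [HasFiniteLimits E]

/-- A pseudo-equivalence relation in a finitely complete category `E`. -/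
structure PseudoEqRel where
  X0 : E
  X1 : E
  s : X1 ⟶ X0
  t : X1 ⟶ X0
  r : X0 ⟶ X1
  rs : r ≫ s = 𝟙 X0
  rt : r ≫ t = 𝟙 X0
  v : X1 ⟶ X1
  vs : v ≫ s = t
  vt : v ≫ t = s
  m : pullback t s ⟶ X1
  ms : m ≫ s = pullback.fst t s ≫ s
  mt : m ≫ t = pullback.snd t s ≫ t

variable {E}

/-- A representative of a morphism of pseudo-equivalence relations. -/
@[ext]
structure Rep (X Y : PseudoEqRel E) where
  f0 : X.X0 ⟶ Y.X0
  f1 : X.X1 ⟶ Y.X1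
  hs : f1 ≫ Y.s = X.s ≫ f0
  ht : f1 ≫ Y.t = X.t ≫ f0

/-- Two representatives are related iff there is a witness of equality. -/
def RepRel {X Y : PseudoEqRel E} (f g : Rep X Y) : Prop :=
  ∃ h : X.X0 ⟶ Y.X1, h ≫ Y.s = f.f0 ∧ h ≫ Y.t = g.f0

theorem repRel_equivalence (X Y : PseudoEqRel E) : Equivalence (RepRel (X := X) (Y := Y)) := by
  constructor
  · intro f
    exact ⟨f.f0 ≫ Y.r, by rw [Category.assoc, Y.rs, Category.comp_id],
      by rw [Category.assoc, Y.rt, Category.comp_id]⟩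
  · rintro f g ⟨h, h1, h2⟩
    exact ⟨h ≫ Y.v, by rw [Category.assoc, Y.vs, h2], by rw [Category.assoc, Y.vt, h1]⟩
  · rintro f g k ⟨h1, h1s, h1t⟩ ⟨h2, h2s, h2t⟩
    refine ⟨pullback.lift h1 h2 (by rw [h1t, h2s]) ≫ Y.m, ?_, ?_⟩
    · rw [Category.assoc, Y.ms, ← Category.assoc, pullback.lift_fst, h1s]
    · rw [Category.assoc, Y.mt, ← Category.assoc, pullback.lift_snd, h2t]

instance repSetoid (X Y : PseudoEqRel E) : Setoid (Rep X Y) :=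
  ⟨RepRel, repRel_equivalence X Y⟩

/-- The identity representative. -/
def Rep.id (X : PseudoEqRel E) : Rep X X :=
  ⟨𝟙 _, 𝟙 _, by simp, by simp⟩

/-- Composition of representatives. -/
def Rep.comp {X Y Z : PseudoEqRel E} (f : Rep X Y) (g : Rep Y Z) : Rep X Z :=
  ⟨f.f0 ≫ g.f0, f.f1 ≫ g.f1, by rw [Category.assoc, g.hs, ← Category.assoc, f.hs, Category.assoc],
    by rw [Category.assoc, g.ht, ← Category.assoc, f.ht, Category.assoc]⟩

theorem repRel_comp {X Y Z : PseudoEqRel E} {f f' : Rep X Y} {g g' : Rep Y Z}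
    (hf : RepRel f f') (hg : RepRel g g') : RepRel (f.comp g) (f'.comp g') := by
  obtain ⟨h1, h1s, h1t⟩ := hf
  obtain ⟨h2, h2s, h2t⟩ := hg
  refine (repRel_equivalence X Z).trans (y := f'.comp g) ?_ ?_
  · exact ⟨h1 ≫ g.f1, by rw [Category.assoc, g.hs, ← Category.assoc, h1s]; rfl,
      by rw [Category.assoc, g.ht, ← Category.assoc, h1t]; rfl⟩
  · exact ⟨f'.f0 ≫ h2, by rw [Category.assoc, h2s]; rfl, by rw [Category.assoc, h2t]; rfl⟩

instance : Category.{v} (PseudoEqRel E) where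
  Hom X Y := Quotient (repSetoid X Y)
  id X := ⟦Rep.id X⟧
  comp {X Y Z} := Quotient.map₂ Rep.comp (fun _ _ hf _ _ hg => repRel_comp hf hg)
  id_comp {X Y} f := by
    refine Quotient.inductionOn f (fun f => Quotient.sound ?_)
    exact ⟨f.f0 ≫ Y.r, by simp [Rep.comp, Rep.id, Y.rs], by simp [Y.rt]⟩
  comp_id {X Y} f := by
    refine Quotient.inductionOn f (fun f => Quotient.sound ?_)
    exact ⟨f.f0 ≫ Y.r, by simp [Rep.comp, Rep.id, Y.rs], by simp [Y.rt]⟩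
  assoc {W X Y Z} f g h := by
    refine Quotient.inductionOn₃ f g h (fun f g h => Quotient.sound ?_)
    exact ⟨(f.f0 ≫ g.f0 ≫ h.f0) ≫ Z.r, by simp [Rep.comp, Z.rs], by simp [Rep.comp, Z.rt]⟩

/-- The inclusion of `E` into its free exact completion, sending an object to the
discrete pseudo-equivalence relation on it. -/
noncomputable def discreteInclusion : E ⥤ PseudoEqRel E where
  obj X :=
    { X0 := X, X1 := X, s := 𝟙 X, t := 𝟙 X, r := 𝟙 X
      rs := by simp, rt := by simp
      v := 𝟙 X, vs := by simp, vt := by simp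
      m := pullback.fst (𝟙 X) (𝟙 X)
      ms := rfl
      mt := by simpa using pullback.condition (f := 𝟙 X) (g := 𝟙 X) }
  map f := ⟦⟨f, f, by simp, by simp⟩⟧
  map_id X := Quotient.sound ⟨𝟙 X, by simp [Rep.id], by simp [Rep.id]⟩
  map_comp f g := Quotient.sound ⟨f ≫ g, by simp, by simp [Rep.comp]⟩

end ExCompletion
namespace ExCompletion

noncomputable section

universe v' u'

variable {E : Type u} [Category.{v} E] [HasFiniteLimits E]
variable {A : Type u'} [Category.{v'} A]

/-- A coherent `A`-diagram in the free exact completion `E_ex`. -/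
structure CohDiag (E : Type u) [Category.{v} E] [HasFiniteLimits E]
    (A : Type u') [Category.{v'} A] where
  obj : A → PseudoEqRel E
  map : ∀ {a a' : A}, (a ⟶ a') → Rep (obj a) (obj a')
  wid : ∀ a : A, (obj a).X0 ⟶ (obj a).X1
  wid_s : ∀ a : A, wid a ≫ (obj a).s = 𝟙 _
  wid_t : ∀ a : A, wid a ≫ (obj a).t = (map (𝟙 a)).f0
  wcomp : ∀ {a a' a'' : A}, (a ⟶ a') → (a' ⟶ a'') → ((obj a).X0 ⟶ (obj a'').X1)
  wcomp_s : ∀ {a a' a''} (α : a ⟶ a') (α' : a' ⟶ a''),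
    wcomp α α' ≫ (obj a'').s = (map α).f0 ≫ (map α').f0
  wcomp_t : ∀ {a a' a''} (α : a ⟶ a') (α' : a' ⟶ a''),
    wcomp α α' ≫ (obj a'').t = (map (α ≫ α')).f0

/-- A representative of a morphism of coherent diagrams. -/
structure CohRep (X Y : CohDiag E A) where
  app : ∀ a : A, Rep (X.obj a) (Y.obj a)
  nat : ∀ {a a' : A}, (a ⟶ a') → ((X.obj a).X0 ⟶ (Y.obj a').X1)
  nat_s : ∀ {a a'} (α : a ⟶ a'), nat α ≫ (Y.obj a').s = (app a).f0 ≫ (Y.map α).f0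
  nat_t : ∀ {a a'} (α : a ⟶ a'), nat α ≫ (Y.obj a').t = (X.map α).f0 ≫ (app a').f0

/-- Witnessed equality of representatives of morphisms of coherent diagrams. -/
def CohRel {X Y : CohDiag E A} (f g : CohRep X Y) : Prop :=
  ∃ h : ∀ a : A, (X.obj a).X0 ⟶ (Y.obj a).X1,
    ∀ a, h a ≫ (Y.obj a).s = (f.app a).f0 ∧ h a ≫ (Y.obj a).t = (g.app a).f0

theorem cohRel_equivalence (X Y : CohDiag E A) : Equivalence (CohRel (X := X) (Y := Y)) := by
  constructor
  · intro f
    exact ⟨fun a => (f.app a).f0 ≫ (Y.obj a).r, fun a =>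
      ⟨by rw [Category.assoc, (Y.obj a).rs, Category.comp_id],
       by rw [Category.assoc, (Y.obj a).rt, Category.comp_id]⟩⟩
  · rintro f g ⟨h, hh⟩
    exact ⟨fun a => h a ≫ (Y.obj a).v, fun a =>
      ⟨by rw [Category.assoc, (Y.obj a).vs, (hh a).2],
       by rw [Category.assoc, (Y.obj a).vt, (hh a).1]⟩⟩
  · rintro f g k ⟨h1, hh1⟩ ⟨h2, hh2⟩
    refine ⟨fun a => pullback.lift (h1 a) (h2 a) (by rw [(hh1 a).2, (hh2 a).1]) ≫ (Y.obj a).m,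
      fun a => ⟨?_, ?_⟩⟩
    · rw [Category.assoc, (Y.obj a).ms, ← Category.assoc, pullback.lift_fst, (hh1 a).1]
    · rw [Category.assoc, (Y.obj a).mt, ← Category.assoc, pullback.lift_snd, (hh2 a).2]

instance cohSetoid (X Y : CohDiag E A) : Setoid (CohRep X Y) :=
  ⟨CohRel, cohRel_equivalence X Y⟩

/-- The identity representative of a coherent diagram. -/
def CohRep.id (X : CohDiag E A) : CohRep X X where
  app a := Rep.id (X.obj a)
  nat {a a'} α := (X.map α).f0 ≫ (X.obj a').r
  nat_s {a a'} α := by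
    rw [Category.assoc, (X.obj a').rs, Category.comp_id]; simp [Rep.id]
  nat_t {a a'} α := by
    rw [Category.assoc, (X.obj a').rt, Category.comp_id]; simp [Rep.id]

/-- Composition of representatives of morphisms of coherent diagrams. -/
def CohRep.comp {X Y Z : CohDiag E A} (f : CohRep X Y) (g : CohRep Y Z) : CohRep X Z where
  app a := (f.app a).comp (g.app a)
  nat {a a'} α :=
    pullback.lift ((f.app a).f0 ≫ g.nat α) (f.nat α ≫ (g.app a').f1)
      (by rw [Category.assoc, Category.assoc, g.nat_t, (g.app a').hs, ← Category.assoc,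
        ← Category.assoc, f.nat_s]) ≫ (Z.obj a').m
  nat_s {a a'} α := by
    rw [Category.assoc, (Z.obj a').ms, ← Category.assoc, pullback.lift_fst,
      Category.assoc, g.nat_s]
    simp [Rep.comp]
  nat_t {a a'} α := by
    rw [Category.assoc, (Z.obj a').mt, ← Category.assoc, pullback.lift_snd,
      Category.assoc, (g.app a').ht, ← Category.assoc, f.nat_t]
    simp [Rep.comp]

theorem cohRel_comp {X Y Z : CohDiag E A} {f f' : CohRep X Y} {g g' : CohRep Y Z}
    (hf : CohRel f f') (hg : CohRel g g') : CohRel (f.comp g) (f'.comp g') := by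
  obtain ⟨h1, hh1⟩ := hf
  obtain ⟨h2, hh2⟩ := hg
  refine (cohRel_equivalence X Z).trans (y := f'.comp g) ?_ ?_
  · exact ⟨fun a => h1 a ≫ (g.app a).f1, fun a =>
      ⟨by rw [Category.assoc, (g.app a).hs, ← Category.assoc, (hh1 a).1]; rfl,
       by rw [Category.assoc, (g.app a).ht, ← Category.assoc, (hh1 a).2]; rfl⟩⟩
  · exact ⟨fun a => (f'.app a).f0 ≫ h2 a, fun a =>
      ⟨by rw [Category.assoc, (hh2 a).1]; rfl, by rw [Category.assoc, (hh2 a).2]; rfl⟩⟩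

theorem cohSound {X Y : CohDiag E A} {f g : CohRep X Y}
    (hfg : ∀ a, (f.app a).f0 = (g.app a).f0) :
    (Quotient.mk (cohSetoid X Y) f) = Quotient.mk (cohSetoid X Y) g :=
  Quotient.sound ⟨fun a => (f.app a).f0 ≫ (Y.obj a).r, fun a =>
    ⟨by rw [Category.assoc, (Y.obj a).rs, Category.comp_id],
     by rw [Category.assoc, (Y.obj a).rt, Category.comp_id, hfg a]⟩⟩

instance : Category.{max u' v' v} (CohDiag E A) where
  Hom X Y := _root_.Quotient (cohSetoid X Y)
  id X := Quotient.mk _ (CohRep.id X)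
  comp {X Y Z} := Quotient.map₂ CohRep.comp (fun _ _ hf _ _ hg => cohRel_comp hf hg)
  id_comp {X Y} f := by
    refine Quotient.inductionOn f (fun f => cohSound (fun a => ?_))
    simp [CohRep.comp, CohRep.id, Rep.comp, Rep.id]
  comp_id {X Y} f := by
    refine Quotient.inductionOn f (fun f => cohSound (fun a => ?_))
    simp [CohRep.comp, CohRep.id, Rep.comp, Rep.id]
  assoc {W X Y Z} f g h := by
    refine Quotient.inductionOn₃ f g h (fun f g h => cohSound (fun a => ?_))
    simp [CohRep.comp, Rep.comp]

variable {A' : Type u'} [Category.{v'} A']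

/-- Restriction of a coherent diagram along a functor. -/
def CohDiag.restrict (u : A' ⥤ A) (X : CohDiag E A) : CohDiag E A' where
  obj a := X.obj (u.obj a)
  map {a a'} α := X.map (u.map α)
  wid a := X.wid (u.obj a)
  wid_s a := X.wid_s (u.obj a)
  wid_t a := by
    show X.wid (u.obj a) ≫ (X.obj (u.obj a)).t = (X.map (u.map (𝟙 a))).f0
    rw [show u.map (𝟙 a) = 𝟙 (u.obj a) from u.map_id a]
    exact X.wid_t (u.obj a)
  wcomp {a a' a''} α α' := X.wcomp (u.map α) (u.map α')
  wcomp_s α α' := X.wcomp_s _ _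
  wcomp_t {a a' a''} α α' := by
    show X.wcomp (u.map α) (u.map α') ≫ (X.obj (u.obj a'')).t = (X.map (u.map (α ≫ α'))).f0
    rw [show u.map (α ≫ α') = u.map α ≫ u.map α' from u.map_comp α α']
    exact X.wcomp_t _ _

/-- Restriction of a representative along a functor. -/
def CohRep.restrict (u : A' ⥤ A) {X Y : CohDiag E A} (f : CohRep X Y) :
    CohRep (X.restrict u) (Y.restrict u) where
  app a := f.app (u.obj a)
  nat {a a'} α := f.nat (u.map α)
  nat_s α := f.nat_s _
  nat_t α := f.nat_t _

/-- The restriction functor `E_ex(A) ⥤ E_ex(A')` along a functor `u : A' ⥤ A`. -/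
def restrictFunctor (E : Type u) [Category.{v} E] [HasFiniteLimits E] (u : A' ⥤ A) :
    CohDiag E A ⥤ CohDiag E A' where
  obj X := X.restrict u
  map {X Y} := Quotient.map (sa := cohSetoid X Y) (sb := cohSetoid _ _) (CohRep.restrict u) (by
    rintro f g ⟨h, hh⟩
    exact ⟨fun a => h (u.obj a), fun a => hh (u.obj a)⟩)
  map_id X := cohSound (fun a => rfl)
  map_comp {X Y Z} f g :=
    Quotient.inductionOn₂ f g (fun f g => cohSound (fun a => rfl))

/-- The constant coherent diagram on an object of `E_ex`. -/
def constObj (A : Type u') [Category.{v'} A] (X : PseudoEqRel E) : CohDiag E A where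
  obj _ := X
  map _ := Rep.id X
  wid _ := X.r
  wid_s _ := X.rs
  wid_t _ := by rw [X.rt]; rfl
  wcomp _ _ := X.r
  wcomp_s _ _ := by rw [X.rs]; simp [Rep.id]
  wcomp_t _ _ := by rw [X.rt]; rfl

/-- The constant representative on a representative. -/
def constRep (A : Type u') [Category.{v'} A] {X Y : PseudoEqRel E} (f : Rep X Y) :
    CohRep (constObj A X) (constObj A Y) where
  app _ := f
  nat _ := f.f0 ≫ Y.r
  nat_s _ := by
    show (f.f0 ≫ Y.r) ≫ Y.s = f.f0 ≫ (Rep.id Y).f0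
    rw [Category.assoc]
    rw [Y.rs]; simp [Rep.id]
  nat_t _ := by
    show (f.f0 ≫ Y.r) ≫ Y.t = (Rep.id X).f0 ≫ f.f0
    rw [Category.assoc]
    rw [Y.rt]; simp [Rep.id]

/-- The constant-diagram functor `p_A^* : E_ex ⥤ E_ex(A)`. -/
def constDiag (E : Type u) [Category.{v} E] [HasFiniteLimits E]
    (A : Type u') [Category.{v'} A] : PseudoEqRel E ⥤ CohDiag E A where
  obj X := constObj A X
  map {X Y} := Quotient.map (sa := repSetoid X Y) (sb := cohSetoid _ _) (constRep A)
    (by rintro f g ⟨h, h1, h2⟩; exact ⟨fun _ => h, fun _ => ⟨h1, h2⟩⟩)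
  map_id X := cohSound (fun a => rfl)
  map_comp {X Y Z} f g :=
    Quotient.inductionOn₂ f g (fun f g => cohSound (fun a => rfl))

end

end ExCompletion

namespace ExCompletion

/-- The type of zigzags from `x` to `y` in a category: paths in the symmetrification
of the underlying quiver. -/
def SymZigzag {A : Type u'} [Category.{v'} A] (x y : A) : Type max u' v' :=
  @Quiver.Path (Quiver.Symmetrify A) _ x y

/-- `u : A ⥤ B` (over a discrete `I`) is a `Set_ex`-equivalence over `I` when restriction
along `u` is fully faithful on the image of restriction along `v : B ⥤ Discrete I`. -/
def IsSetExEquiv {A B : Type u'} [Category.{u'} A] [Category.{u'} B] {I : Type u'}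
    (F : A ⥤ B) (V : B ⥤ Discrete I) : Prop :=
  ∀ X Y : CohDiag (Type u') (Discrete I),
    Function.Bijective
      (fun g : (restrictFunctor (Type u') V).obj X ⟶ (restrictFunctor (Type u') V).obj Y =>
        (restrictFunctor (Type u') F).map g)

/-- The data exhibiting `u : A ⥤ B` as a `Set_ex`-equivalence: a function on objects
together with functions assigning zigzags. -/
structure ZigzagData {A B : Type u'} [Category.{u'} A] [Category.{u'} B] (F : A ⥤ B) :
    Type u' where
  sec : B → A
  zmor : ∀ {b b' : B}, (b ⟶ b') → SymZigzag (sec b) (sec b')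
  zcounit : ∀ b : B, SymZigzag b (F.obj (sec b))
  zunit : ∀ a : A, SymZigzag a (sec (F.obj a))

end ExCompletion

namespace ExCompletion

universe u'

open CategoryTheory Limits

section Infra

variable {I : Type u'}

/-- The pointwise relation induced by a pseudo-equivalence relation in `Type`. -/
def RelP (P : PseudoEqRel (Type u')) (x y : P.X0) : Prop :=
  ∃ z : P.X1, P.s z = x ∧ P.t z = y

theorem RelP.refl (P : PseudoEqRel (Type u')) (x : P.X0) : RelP P x x :=
  ⟨P.r x, by have := types_congr_hom P.rs x; simpa using this,
    by have := types_congr_hom P.rt x; simpa using this⟩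

theorem RelP.symm {P : PseudoEqRel (Type u')} {x y : P.X0} (h : RelP P x y) : RelP P y x := by
  obtain ⟨z, h1, h2⟩ := h
  refine ⟨P.v z, ?_, ?_⟩
  · have := types_congr_hom P.vs z; simp only [types_comp_apply] at this; rw [this, h2]
  · have := types_congr_hom P.vt z; simp only [types_comp_apply] at this; rw [this, h1]

theorem RelP.trans {P : PseudoEqRel (Type u')} {x y w : P.X0}
    (h : RelP P x y) (h' : RelP P y w) : RelP P x w := by
  obtain ⟨z1, hz1s, hz1t⟩ := h
  obtain ⟨z2, hz2s, hz2t⟩ := h'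
  have hmid : TypeCat.ofHom (fun _ : PUnit.{u'+1} => z1) ≫ P.t
      = TypeCat.ofHom (fun _ : PUnit.{u'+1} => z2) ≫ P.s :=
    ConcreteCategory.hom_ext _ _ fun _ => by
      simp only [types_comp_apply, TypeCat.ofHom_apply]; rw [hz1t, hz2s]
  refine ⟨P.m (pullback.lift _ _ hmid PUnit.unit), ?_, ?_⟩
  · have h1 := types_congr_hom P.ms (pullback.lift _ _ hmid PUnit.unit)
    have h2 := types_congr_hom (pullback.lift_fst _ _ hmid) PUnit.unit
    simp only [types_comp_apply, TypeCat.ofHom_apply] at h1 h2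
    rw [h1, h2, hz1s]
  · have h1 := types_congr_hom P.mt (pullback.lift _ _ hmid PUnit.unit)
    have h2 := types_congr_hom (pullback.lift_snd _ _ hmid) PUnit.unit
    simp only [types_comp_apply, TypeCat.ofHom_apply] at h1 h2
    rw [h1, h2, hz2t]

/-- Transport of elements of a family of pseudo-equivalence relations along an equality. -/
def cEl (P : Discrete I → PseudoEqRel (Type u')) {i j : Discrete I} (e : i = j)
    (x : (P i).X0) : (P j).X0 :=
  cast (congrArg (fun k => (P k).X0) e) x

theorem cEl_self (P : Discrete I → PseudoEqRel (Type u')) {i : Discrete I} (e : i = i)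
    (x : (P i).X0) : cEl P e x = x :=
  cast_eq _ x

theorem cEl_cEl (P : Discrete I → PseudoEqRel (Type u')) {i j k : Discrete I}
    (e : i = j) (e' : j = k) (e'' : i = k) (x : (P i).X0) :
    cEl P e' (cEl P e x) = cEl P e'' x := by
  cases e; cases e'; simp only [cEl_self]

theorem relP_cast (P : Discrete I → PseudoEqRel (Type u')) {i j : Discrete I} (e : i = j)
    {x y : (P i).X0} : RelP (P i) x y ↔ RelP (P j) (cEl P e x) (cEl P e y) := by
  cases e; simp only [cEl_self]

theorem rep_relP {P Q : PseudoEqRel (Type u')} (f : Rep P Q) {x y : P.X0} (h : RelP P x y) :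
    RelP Q (f.f0 x) (f.f0 y) := by
  obtain ⟨z, h1, h2⟩ := h
  refine ⟨f.f1 z, ?_, ?_⟩
  · have := types_congr_hom f.hs z; simp only [types_comp_apply] at this; rw [this, h1]
  · have := types_congr_hom f.ht z; simp only [types_comp_apply] at this; rw [this, h2]

/-- Morphisms in a discrete category yield equalities. -/
def discEq {i j : Discrete I} (δ : i ⟶ j) : i = j :=
  Discrete.ext (Discrete.eq_of_hom δ)

theorem map_relP (X : CohDiag (Type u') (Discrete I)) {i j : Discrete I} (δ : i ⟶ j)
    (e : i = j) (x : (X.obj i).X0) :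
    RelP (X.obj j) (cEl X.obj e x) ((X.map δ).f0 x) := by
  cases e
  obtain rfl : δ = 𝟙 i := Subsingleton.elim _ _
  rw [cEl_self]
  refine ⟨X.wid i x, ?_, ?_⟩
  · have := types_congr_hom (X.wid_s i) x; simpa using this
  · have := types_congr_hom (X.wid_t i) x; simpa using this

theorem exists_hom {α : Type u'} {P : PseudoEqRel (Type u')} (f g : α → P.X0)
    (h : ∀ x, RelP P (f x) (g x)) :
    ∃ n : α → P.X1, (∀ x, P.s (n x) = f x) ∧ (∀ x, P.t (n x) = g x) := by
  choose n h1 h2 using h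
  exact ⟨n, h1, h2⟩

/-- Build a representative from its object component. -/
noncomputable def mkRep {P Q : PseudoEqRel (Type u')} (f0 : P.X0 → Q.X0)
    (h : ∀ z : P.X1, RelP Q (f0 (P.s z)) (f0 (P.t z))) : Rep P Q where
  f0 := TypeCat.ofHom f0
  f1 := TypeCat.ofHom fun z => (h z).choose
  hs := ConcreteCategory.hom_ext _ _ fun z => (h z).choose_spec.1
  ht := ConcreteCategory.hom_ext _ _ fun z => (h z).choose_spec.2

/-- Build a representative of a morphism of coherent diagrams from pointwise data. -/
noncomputable def mkCohRep {C : Type u'} [Category.{u'} C] {X Y : CohDiag (Type u') C}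
    (app : ∀ c : C, Rep (X.obj c) (Y.obj c))
    (h : ∀ {c c' : C} (γ : c ⟶ c') (x : (X.obj c).X0),
      RelP (Y.obj c') ((Y.map γ).f0 ((app c).f0 x)) ((app c').f0 ((X.map γ).f0 x))) :
    CohRep X Y where
  app := app
  nat {c c'} γ := TypeCat.ofHom fun x => (h γ x).choose
  nat_s {c c'} γ := ConcreteCategory.hom_ext _ _ fun x => (h γ x).choose_spec.1
  nat_t {c c'} γ := ConcreteCategory.hom_ext _ _ fun x => (h γ x).choose_spec.2

theorem zig_obj_eq {C : Type u'} [Category.{u'} C] (W : C ⥤ Discrete I) :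
    ∀ {x y : C}, SymZigzag x y → W.obj x = W.obj y := by
  intro x y p
  induction p with
  | nil => rfl
  | cons p g ih =>
    refine ih.trans ?_
    rcases g with g | g
    · exact discEq (W.map g)
    · exact (discEq (W.map g)).symm

section Transport

variable {C : Type u'} [Category.{u'} C] (W : C ⥤ Discrete I)
variable (X Y : CohDiag (Type u') (Discrete I))

theorem edge_relP (f : CohRep (X.restrict W) (Y.restrict W)) {c c' : C} (β : c ⟶ c')
    (e : W.obj c = W.obj c') (x : (X.obj (W.obj c)).X0) :
    RelP (Y.obj (W.obj c')) (cEl Y.obj e ((f.app c).f0 x)) ((f.app c').f0 (cEl X.obj e x)) := by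
  have h0 : RelP (Y.obj (W.obj c')) ((Y.map (W.map β)).f0 ((f.app c).f0 x))
      ((f.app c').f0 ((X.map (W.map β)).f0 x)) := by
    refine ⟨f.nat β x, ?_, ?_⟩
    · have := types_congr_hom (f.nat_s β) x; exact this
    · have := types_congr_hom (f.nat_t β) x; exact this
  have h1 := map_relP Y (W.map β) e ((f.app c).f0 x)
  have h2 := rep_relP (f.app c') (map_relP X (W.map β) e x)
  exact (h1.trans h0).trans h2.symm

theorem edge_relP' (f : CohRep (X.restrict W) (Y.restrict W)) {c c' : C} (β : c' ⟶ c)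
    (e : W.obj c = W.obj c') (x : (X.obj (W.obj c)).X0) :
    RelP (Y.obj (W.obj c')) (cEl Y.obj e ((f.app c).f0 x)) ((f.app c').f0 (cEl X.obj e x)) := by
  have h := edge_relP W X Y f β e.symm (cEl X.obj e x)
  rw [cEl_cEl X.obj e e.symm rfl, cEl_self] at h
  have h2 := (relP_cast Y.obj e).mp h.symm
  erw [cEl_cEl Y.obj e.symm e rfl, cEl_self] at h2; exact h2

theorem zig_relP (f : CohRep (X.restrict W) (Y.restrict W)) {c c' : C} (p : SymZigzag c c')
    (e : W.obj c = W.obj c') (x : (X.obj (W.obj c)).X0) :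
    RelP (Y.obj (W.obj c')) (cEl Y.obj e ((f.app c).f0 x)) ((f.app c').f0 (cEl X.obj e x)) := by
  induction p with
  | nil =>
    erw [cEl_self, cEl_self]
    exact RelP.refl _ _
  | @cons d c' p g ih =>
    have e1 : W.obj c = W.obj d := zig_obj_eq W p
    have e2 : W.obj d = W.obj c' := e1.symm.trans e
    have h2 := (relP_cast Y.obj e2).mp (ih e1)
    erw [cEl_cEl Y.obj e1 e2 e] at h2
    have hedge : RelP (Y.obj (W.obj c')) (cEl Y.obj e2 ((f.app d).f0 (cEl X.obj e1 x)))
        ((f.app c').f0 (cEl X.obj e2 (cEl X.obj e1 x))) := by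
      rcases g with g | g
      · exact edge_relP W X Y f g e2 _
      · exact edge_relP' W X Y f g e2 _
    erw [cEl_cEl X.obj e1 e2 e] at hedge
    exact h2.trans hedge

end Transport

theorem cohRel_of_pointwise {C : Type u'} [Category.{u'} C] {X Y : CohDiag (Type u') C}
    {f g : CohRep X Y}
    (h : ∀ (c : C) (x : (X.obj c).X0), RelP (Y.obj c) ((f.app c).f0 x) ((g.app c).f0 x)) :
    CohRel f g := by
  have h' : ∀ c : C, ∃ n : (X.obj c).X0 → (Y.obj c).X1,
      (∀ x, (Y.obj c).s (n x) = (f.app c).f0 x) ∧ (∀ x, (Y.obj c).t (n x) = (g.app c).f0 x) :=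
    fun c => exists_hom _ _ (h c)
  choose n h1 h2 using h'
  exact ⟨fun c => TypeCat.ofHom (n c), fun c => ⟨ConcreteCategory.hom_ext _ _ (h1 c),
    ConcreteCategory.hom_ext _ _ (h2 c)⟩⟩

theorem relP_of_cohRel {C : Type u'} [Category.{u'} C] {X Y : CohDiag (Type u') C}
    {f g : CohRep X Y} (h : CohRel f g) (c : C) (x : (X.obj c).X0) :
    RelP (Y.obj c) ((f.app c).f0 x) ((g.app c).f0 x) := by
  obtain ⟨nn, hn⟩ := h
  exact ⟨nn c x, by have := types_congr_hom (hn c).1 x; simpa using this,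
    by have := types_congr_hom (hn c).2 x; simpa using this⟩

end Infra

end ExCompletion
namespace ExCompletion

universe u'

open CategoryTheory Limits

section Backward

variable {A B : Type u'} [Category.{u'} A] [Category.{u'} B] {I : Type u'}
variable (F : A ⥤ B) (V : B ⥤ Discrete I)

/-- The fiber equality induced by the counit zigzag. -/
def ebEq (Z : ZigzagData F) (b : B) : V.obj b = V.obj (F.obj (Z.sec b)) :=
  zig_obj_eq V (Z.zcounit b)

variable (Z : ZigzagData F) (X Y : CohDiag (Type u') (Discrete I))

/-- The object components of a preimage representative. -/
noncomputable def backApp (g : CohRep (X.restrict (F ⋙ V)) (Y.restrict (F ⋙ V))) (b : B) :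
    Rep (X.obj (V.obj b)) (Y.obj (V.obj b)) :=
  mkRep (fun x => cEl Y.obj (ebEq F V Z b).symm
      ((g.app (Z.sec b)).f0 (cEl X.obj (ebEq F V Z b) x)))
    (fun z => by
      have h0 : RelP (X.obj (V.obj b)) ((X.obj (V.obj b)).s z) ((X.obj (V.obj b)).t z) :=
        ⟨z, rfl, rfl⟩
      have h1 := (relP_cast X.obj (ebEq F V Z b)).mp h0
      have h2 := rep_relP (g.app (Z.sec b)) h1
      exact (relP_cast Y.obj (ebEq F V Z b).symm).mp h2)

theorem backApp_nat (g : CohRep (X.restrict (F ⋙ V)) (Y.restrict (F ⋙ V)))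
    {b b' : B} (β : b ⟶ b') (x : (X.obj (V.obj b)).X0) :
    RelP (Y.obj (V.obj b'))
      ((Y.map (V.map β)).f0 ((backApp F V Z X Y g b).f0 x))
      ((backApp F V Z X Y g b').f0 ((X.map (V.map β)).f0 x)) := by
  set eβ := discEq (V.map β) with heβ
  set e := ebEq F V Z b with he
  set e' := ebEq F V Z b' with he'
  set eA : V.obj (F.obj (Z.sec b)) = V.obj (F.obj (Z.sec b')) :=
    zig_obj_eq (F ⋙ V) (Z.zmor β) with heA
  -- step 1 : the map component is a cast, up to the relation
  have h1 : RelP (Y.obj (V.obj b')) ((Y.map (V.map β)).f0 ((backApp F V Z X Y g b).f0 x))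
      (cEl Y.obj eβ ((backApp F V Z X Y g b).f0 x)) :=
    (map_relP Y (V.map β) eβ _).symm
  -- step 3 : backApp b' preserves the relation
  have h3 : RelP (Y.obj (V.obj b'))
      ((backApp F V Z X Y g b').f0 (cEl X.obj eβ x))
      ((backApp F V Z X Y g b').f0 ((X.map (V.map β)).f0 x)) :=
    rep_relP (backApp F V Z X Y g b') (map_relP X (V.map β) eβ x)
  -- step 2 : the core comparison across the zigzag in `A`
  have core := zig_relP (F ⋙ V) X Y g (Z.zmor β) eA (cEl X.obj e x)
  have step := (relP_cast Y.obj e'.symm).mp core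
  erw [cEl_cEl Y.obj eA e'.symm (e.symm.trans eβ)] at step
  erw [cEl_cEl X.obj e eA (eβ.trans e')] at step
  have h2 : RelP (Y.obj (V.obj b'))
      (cEl Y.obj eβ ((backApp F V Z X Y g b).f0 x))
      ((backApp F V Z X Y g b').f0 (cEl X.obj eβ x)) := by
    show RelP (Y.obj (V.obj b'))
      (cEl Y.obj eβ (cEl Y.obj e.symm ((g.app (Z.sec b)).f0 (cEl X.obj e x))))
      (cEl Y.obj e'.symm ((g.app (Z.sec b')).f0 (cEl X.obj e' (cEl X.obj eβ x))))
    erw [cEl_cEl Y.obj e.symm eβ (e.symm.trans eβ)]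
    erw [cEl_cEl X.obj eβ e' (eβ.trans e')]
    exact step
  exact (h1.trans h2).trans h3

include Z in
theorem isSetExEquiv_of_zigzagData : IsSetExEquiv F V := by
  intro X Y
  constructor
  · -- injectivity
    intro φ ψ hfg
    refine Quotient.inductionOn₂ φ ψ (fun f g hfg => ?_) hfg
    have hrel : CohRel (f.restrict F) (g.restrict F) := Quotient.exact hfg
    refine Quotient.sound (cohRel_of_pointwise fun b x => ?_)
    have e := ebEq F V Z b
    have h1 := zig_relP V X Y f (Z.zcounit b) e x
    have h2 := zig_relP V X Y g (Z.zcounit b) e x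
    have hmid := relP_of_cohRel hrel (Z.sec b) (cEl X.obj e x)
    exact (relP_cast Y.obj e).mpr ((h1.trans hmid).trans h2.symm)
  · -- surjectivity
    intro ψ
    refine Quotient.inductionOn ψ (fun g => ?_)
    refine ⟨Quotient.mk _ (mkCohRep (backApp F V Z X Y g)
      (fun {b b'} β x => backApp_nat F V Z X Y g β x)), ?_⟩
    refine Quotient.sound (cohRel_of_pointwise fun a x => ?_)
    have e := ebEq F V Z (F.obj a)
    have hz := zig_relP (F ⋙ V) X Y g (Z.zunit a) e x
    have step := (relP_cast Y.obj e.symm).mp hz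
    erw [cEl_cEl Y.obj e e.symm rfl, cEl_self] at step
    exact step.symm

end Backward

end ExCompletion
namespace ExCompletion

universe u'

open CategoryTheory Limits

section Forward

variable {I : Type u'}

/-- The canonical representative given by transport along an equality. -/
def castRep (P : Discrete I → PseudoEqRel (Type u')) {i j : Discrete I} (e : i = j) :
    Rep (P i) (P j) := by
  cases e; exact Rep.id _

theorem castRep_f0 (P : Discrete I → PseudoEqRel (Type u')) {i j : Discrete I} (e : i = j) :
    (castRep P e).f0 = TypeCat.ofHom (cEl P e) := by
  cases e; rfl

/-- The coherent diagram over a discrete category determined by a family of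
pseudo-equivalence relations. -/
def diagOfDiscrete (P : Discrete I → PseudoEqRel (Type u')) :
    CohDiag (Type u') (Discrete I) where
  obj := P
  map {i j} δ := castRep P (discEq δ)
  wid i := (P i).r
  wid_s i := (P i).rs
  wid_t i := by
    rw [castRep_f0]
    refine ConcreteCategory.hom_ext _ _ fun x => ?_
    have h := types_congr_hom (P i).rt x
    exact h.trans (cEl_self P (discEq (𝟙 i)) x).symm
  wcomp {i j k} δ δ' := TypeCat.ofHom fun x => (P k).r (cEl P ((discEq δ).trans (discEq δ')) x)
  wcomp_s {i j k} δ δ' := by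
    rw [castRep_f0, castRep_f0]
    refine ConcreteCategory.hom_ext _ _ fun x => ?_
    have h := types_congr_hom (P k).rs (cEl P ((discEq δ).trans (discEq δ')) x)
    simp only [types_comp_apply, TypeCat.ofHom_apply] at h ⊢
    rw [h, cEl_cEl P (discEq δ) (discEq δ') ((discEq δ).trans (discEq δ'))]
    rfl
  wcomp_t {i j k} δ δ' := by
    rw [castRep_f0]
    refine ConcreteCategory.hom_ext _ _ fun x => ?_
    have h := types_congr_hom (P k).rt (cEl P ((discEq δ).trans (discEq δ')) x)
    simp only [types_comp_apply, TypeCat.ofHom_apply] at h ⊢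
    exact h.trans (by rfl)

variable {A B : Type u'} [Category.{u'} A] [Category.{u'} B]
variable (F : A ⥤ B) (V : B ⥤ Discrete I)

/-- The terminal pseudo-equivalence relation. -/
def TP : PseudoEqRel (Type u') where
  X0 := PUnit
  X1 := PUnit
  s := TypeCat.ofHom fun _ => PUnit.unit
  t := TypeCat.ofHom fun _ => PUnit.unit
  r := TypeCat.ofHom fun _ => PUnit.unit
  rs := rfl
  rt := rfl
  v := TypeCat.ofHom fun _ => PUnit.unit
  vs := rfl
  vt := rfl
  m := TypeCat.ofHom fun _ => PUnit.unit
  ms := rfl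
  mt := rfl

/-- Image of a zigzag under a functor. -/
def mapZig : ∀ {x y : A}, SymZigzag x y → SymZigzag (F.obj x) (F.obj y) :=
  fun p => (F.toPrefunctor.symmetrify).mapPath p

/-- The fiber of `V` over `i`. -/
def fiberB (i : Discrete I) : Type u' := {b : B // V.obj b = i}

/-- Zigzag-connectedness witnesses in the fiber of `V` over `i`. -/
def zagB (i : Discrete I) : Type u' :=
  {p : fiberB V i × fiberB V i // Nonempty (SymZigzag p.1.1 p.2.1)}

def sB (i : Discrete I) : (zagB V i : Type u') ⟶ fiberB V i :=
  TypeCat.ofHom fun (z : zagB V i) => z.1.1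
def tB (i : Discrete I) : (zagB V i : Type u') ⟶ fiberB V i :=
  TypeCat.ofHom fun (z : zagB V i) => z.1.2

/-- The free pseudo-equivalence relation on the fiber of `V` over `i`. -/
noncomputable def PB (i : Discrete I) : PseudoEqRel (Type u') where
  X0 := fiberB V i
  X1 := zagB V i
  s := sB V i
  t := tB V i
  r := TypeCat.ofHom fun x => ⟨(x, x), ⟨Quiver.Path.nil⟩⟩
  rs := rfl
  rt := rfl
  v := TypeCat.ofHom fun z => ⟨(z.1.2, z.1.1), z.2.elim fun p => ⟨p.reverse⟩⟩
  vs := rfl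
  vt := rfl
  m := TypeCat.ofHom fun w => ⟨((pullback.fst (tB V i) (sB V i) w).1.1, (pullback.snd (tB V i) (sB V i) w).1.2), by
    have cond := types_congr_hom (pullback.condition (f := tB V i) (g := sB V i)) w
    simp only [types_comp_apply] at cond
    obtain ⟨p⟩ := (pullback.fst (tB V i) (sB V i) w).2
    obtain ⟨q⟩ := (pullback.snd (tB V i) (sB V i) w).2
    have hc : (((pullback.fst (tB V i) (sB V i) w).1.2).1 : B)
        = ((pullback.snd (tB V i) (sB V i) w).1.1).1 := congrArg Subtype.val cond
    rw [← hc] at q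
    exact ⟨p.comp q⟩⟩
  ms := rfl
  mt := rfl

/-- The fiber of `V ∘ F` over `i`. -/
def fiberA (i : Discrete I) : Type u' := {a : A // V.obj (F.obj a) = i}

def zagA (i : Discrete I) : Type u' :=
  {p : fiberA F V i × fiberA F V i // Nonempty (SymZigzag p.1.1 p.2.1)}

def sA (i : Discrete I) : (zagA F V i : Type u') ⟶ fiberA F V i :=
  TypeCat.ofHom fun (z : zagA F V i) => z.1.1
def tA (i : Discrete I) : (zagA F V i : Type u') ⟶ fiberA F V i :=
  TypeCat.ofHom fun (z : zagA F V i) => z.1.2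

/-- The free pseudo-equivalence relation on the fiber of `V ∘ F` over `i`. -/
noncomputable def PA (i : Discrete I) : PseudoEqRel (Type u') where
  X0 := fiberA F V i
  X1 := zagA F V i
  s := sA F V i
  t := tA F V i
  r := TypeCat.ofHom fun x => ⟨(x, x), ⟨Quiver.Path.nil⟩⟩
  rs := rfl
  rt := rfl
  v := TypeCat.ofHom fun z => ⟨(z.1.2, z.1.1), z.2.elim fun p => ⟨p.reverse⟩⟩
  vs := rfl
  vt := rfl
  m := TypeCat.ofHom fun w => ⟨((pullback.fst (tA F V i) (sA F V i) w).1.1,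
      (pullback.snd (tA F V i) (sA F V i) w).1.2), by
    have cond := types_congr_hom (pullback.condition (f := tA F V i) (g := sA F V i)) w
    simp only [types_comp_apply] at cond
    obtain ⟨p⟩ := (pullback.fst (tA F V i) (sA F V i) w).2
    obtain ⟨q⟩ := (pullback.snd (tA F V i) (sA F V i) w).2
    have hc : (((pullback.fst (tA F V i) (sA F V i) w).1.2).1 : A)
        = ((pullback.snd (tA F V i) (sA F V i) w).1.1).1 := congrArg Subtype.val cond
    rw [← hc] at q
    exact ⟨p.comp q⟩⟩
  ms := rfl
  mt := rfl

theorem cEl_PB_fst {i j : Discrete I} (e : i = j) (x : (PB V i).X0) :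
    ((cEl (PB V) e x).1 : B) = x.1 := by
  cases e; rw [cEl_self]

theorem cEl_PA_fst {i j : Discrete I} (e : i = j) (x : (PA F V i).X0) :
    ((cEl (PA F V) e x).1 : A) = x.1 := by
  cases e; rw [cEl_self]

/-- The terminal diagram. -/
def TD : CohDiag (Type u') (Discrete I) := diagOfDiscrete (fun _ => TP)

noncomputable def YB : CohDiag (Type u') (Discrete I) := diagOfDiscrete (PB V)

noncomputable def YA : CohDiag (Type u') (Discrete I) := diagOfDiscrete (PA F V)

end Forward

end ExCompletion
namespace ExCompletion

universe u'

open CategoryTheory Limits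

section Forward2

variable {I : Type u'} {A B : Type u'} [Category.{u'} A] [Category.{u'} B]
variable (F : A ⥤ B) (V : B ⥤ Discrete I)

/-- The canonical point of `V^* Y_B`. -/
noncomputable def cB : CohRep ((TD (I := I)).restrict V) ((YB V).restrict V) where
  app b :=
    { f0 := TypeCat.ofHom fun _ => ⟨b, rfl⟩
      f1 := TypeCat.ofHom fun _ => ⟨(⟨b, rfl⟩, ⟨b, rfl⟩), ⟨Quiver.Path.nil⟩⟩
      hs := rfl
      ht := rfl }
  nat {b b'} β := TypeCat.ofHom fun _ => ⟨(cEl (PB V) (discEq (V.map β)) ⟨b, rfl⟩, ⟨b', rfl⟩), by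
    rw [cEl_PB_fst V (discEq (V.map β)) ⟨b, rfl⟩]
    exact ⟨Quiver.Hom.toPath (Sum.inl β)⟩⟩
  nat_s {b b'} β := by
    refine ConcreteCategory.hom_ext _ _ fun x => ?_
    show cEl (PB V) (discEq (V.map β)) ⟨b, rfl⟩
      = (castRep (PB V) (discEq (V.map β))).f0 ⟨b, rfl⟩
    rw [castRep_f0]; rfl
  nat_t {b b'} β := rfl

/-- The canonical point of `F^* V^* Y_A`. -/
noncomputable def cA :
    CohRep (((TD (I := I)).restrict V).restrict F) (((YA F V).restrict V).restrict F) where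
  app a :=
    { f0 := TypeCat.ofHom fun _ => ⟨a, rfl⟩
      f1 := TypeCat.ofHom fun _ => ⟨(⟨a, rfl⟩, ⟨a, rfl⟩), ⟨Quiver.Path.nil⟩⟩
      hs := rfl
      ht := rfl }
  nat {a a'} α := TypeCat.ofHom fun _ => ⟨(cEl (PA F V) (discEq (V.map (F.map α))) ⟨a, rfl⟩, ⟨a', rfl⟩), by
    rw [cEl_PA_fst F V (discEq (V.map (F.map α))) ⟨a, rfl⟩]
    exact ⟨Quiver.Hom.toPath (Sum.inl α)⟩⟩
  nat_s {a a'} α := by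
    refine ConcreteCategory.hom_ext _ _ fun x => ?_
    show cEl (PA F V) (discEq (V.map (F.map α))) ⟨a, rfl⟩
      = (castRep (PA F V) (discEq (V.map (F.map α)))).f0 ⟨a, rfl⟩
    rw [castRep_f0]; rfl
  nat_t {a a'} α := rfl

/-- The comparison morphism from `Y_A` to `Y_B` over the discrete base. -/
noncomputable def kRep : CohRep (YA F V) (YB V) where
  app i :=
    { f0 := TypeCat.ofHom fun a => ⟨F.obj a.1, a.2⟩
      f1 := TypeCat.ofHom fun z => ⟨(⟨F.obj z.1.1.1, z.1.1.2⟩, ⟨F.obj z.1.2.1, z.1.2.2⟩),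
        z.2.elim fun p => ⟨mapZig F p⟩⟩
      hs := rfl
      ht := rfl }
  nat {i j} δ := TypeCat.ofHom fun a => ⟨(cEl (PB V) (discEq δ) ⟨F.obj a.1, a.2⟩,
      ⟨F.obj ((cEl (PA F V) (discEq δ) a).1), (cEl (PA F V) (discEq δ) a).2⟩), by
    show Nonempty (SymZigzag ((cEl (PB V) (discEq δ) ⟨F.obj a.1, a.2⟩).1)
      (F.obj ((cEl (PA F V) (discEq δ) a).1)))
    erw [cEl_PB_fst V (discEq δ), cEl_PA_fst F V (discEq δ)]
    exact ⟨Quiver.Path.nil⟩⟩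
  nat_s {i j} δ := by
    refine ConcreteCategory.hom_ext _ _ fun a => ?_
    show cEl (PB V) (discEq δ) ⟨F.obj a.1, a.2⟩
      = (castRep (PB V) (discEq δ)).f0 ⟨F.obj a.1, a.2⟩
    rw [castRep_f0]; rfl
  nat_t {i j} δ := by
    refine ConcreteCategory.hom_ext _ _ fun a => ?_
    show (⟨F.obj ((cEl (PA F V) (discEq δ) a).1), (cEl (PA F V) (discEq δ) a).2⟩
        : fiberB V j)
      = ⟨F.obj (((castRep (PA F V) (discEq δ)).f0 a).1), ((castRep (PA F V) (discEq δ)).f0 a).2⟩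
    rw [castRep_f0]; rfl

theorem zigzagData_of_isSetExEquiv (H : IsSetExEquiv F V) : Nonempty (ZigzagData F) := by
  obtain ⟨φ, hφ⟩ := (H (TD (I := I)) (YA F V)).2 (Quotient.mk _ (cA F V))
  obtain ⟨f, rfl⟩ := Quotient.exists_rep φ
  obtain ⟨hw, hhw⟩ : CohRel (f.restrict F) (cA F V) := Quotient.exact hφ
  -- the unit zigzags
  have hzu : ∀ a : A, Nonempty (SymZigzag a (((f.app (F.obj a)).f0 PUnit.unit).1)) := by
    intro a
    obtain ⟨p⟩ := (hw a PUnit.unit).2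
    have e1 : ((hw a PUnit.unit).1.1).1 = ((f.app (F.obj a)).f0 PUnit.unit).1 :=
      congrArg Subtype.val (types_congr_hom (hhw a).1 PUnit.unit)
    have e2 : ((hw a PUnit.unit).1.2).1 = a :=
      congrArg Subtype.val (types_congr_hom (hhw a).2 PUnit.unit)
    rw [e1, e2] at p
    exact ⟨p.reverse⟩
  -- the morphism zigzags
  have hzm : ∀ {b b' : B} (_ : b ⟶ b'),
      Nonempty (SymZigzag (((f.app b).f0 PUnit.unit).1) (((f.app b').f0 PUnit.unit).1)) := by
    intro b b' β
    obtain ⟨p⟩ := (f.nat β PUnit.unit).2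
    have e1 : ((f.nat β PUnit.unit).1.1).1 = ((f.app b).f0 PUnit.unit).1 := by
      have h1 := congrArg Subtype.val (types_congr_hom (f.nat_s β) PUnit.unit)
      have h2 := congrArg Subtype.val
        (types_congr_hom (castRep_f0 (PA F V) (discEq (V.map β))) ((f.app b).f0 PUnit.unit))
      exact (h1.trans h2).trans (cEl_PA_fst F V (discEq (V.map β)) ((f.app b).f0 PUnit.unit))
    have e2 : ((f.nat β PUnit.unit).1.2).1 = ((f.app b').f0 PUnit.unit).1 :=
      congrArg Subtype.val (types_congr_hom (f.nat_t β) PUnit.unit)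
    rw [e1, e2] at p
    exact ⟨p⟩
  -- the counit zigzags
  have hinj := (H (TD (I := I)) (YB V)).1
  have key : (restrictFunctor (Type u') F).map
        (Quotient.mk _ (CohRep.comp f ((kRep F V).restrict V)))
      = (restrictFunctor (Type u') F).map (Quotient.mk _ (cB V)) := by
    apply Quotient.sound
    apply cohRel_of_pointwise
    intro a x
    refine ⟨⟨((((CohRep.comp f ((kRep F V).restrict V)).restrict F).app a).f0 x,
      (((cB V).restrict F).app a).f0 x), ?_⟩, rfl, rfl⟩
    show Nonempty (SymZigzag (F.obj (((f.app (F.obj a)).f0 PUnit.unit).1)) (F.obj a))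
    obtain ⟨p⟩ := hzu a
    exact ⟨(mapZig F p).reverse⟩
  obtain ⟨hw2, hhw2⟩ : CohRel (CohRep.comp f ((kRep F V).restrict V)) (cB V) :=
    Quotient.exact (hinj key)
  have hzc : ∀ b : B, Nonempty (SymZigzag b (F.obj (((f.app b).f0 PUnit.unit).1))) := by
    intro b
    obtain ⟨p⟩ := (hw2 b PUnit.unit).2
    have e1 : ((hw2 b PUnit.unit).1.1).1 = F.obj (((f.app b).f0 PUnit.unit).1) :=
      congrArg Subtype.val (types_congr_hom (hhw2 b).1 PUnit.unit)
    have e2 : ((hw2 b PUnit.unit).1.2).1 = b :=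
      congrArg Subtype.val (types_congr_hom (hhw2 b).2 PUnit.unit)
    rw [e1, e2] at p
    exact ⟨p.reverse⟩
  exact ⟨⟨fun b => ((f.app b).f0 PUnit.unit).1,
    fun {b b'} β => Classical.choice (hzm β),
    fun b => Classical.choice (hzc b),
    fun a => Classical.choice (hzu a)⟩⟩

end Forward2

end ExCompletion
open ExCompletion in
/-- A functor `u : A ⥤ B` over a discrete set `I` is a
`Set_ex`-equivalence over `I` if and only if there exist: a function `s : ob B → ob A`;
a function assigning to each morphism `β : b ⟶ b'` of `B` a zigzag in `A` from `s b` to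
`s b'`; a function assigning to each `b` a zigzag in `B` from `b` to `u (s b)`; and a
function assigning to each `a` a zigzag in `A` from `a` to `s (u a)`. -/
theorem isSetExEquiv_iff_zigzagData
    {A B I : Type u'} [Category.{u'} A] [Category.{u'} B]
    (F : A ⥤ B) (V : B ⥤ Discrete I) :
    Nonempty (ZigzagData F) ↔ IsSetExEquiv F V := by
  constructor
  · rintro ⟨Z⟩
    exact isSetExEquiv_of_zigzagData F V Z
  · intro H
    exact zigzagData_of_isSetExEquiv F V H
end

section
/- In the derivator Set_ex, for the 'path space' construction ℘X̃ of the strictification X̃ of a coherent diagram X, the section ρ : X̃ → ℘X̃ satisfies σ∘ρ = τ∘ρ = id, and the coproduct over objects Σ_a ρ_a is a Set_ex-equivalence over ob(A); hence so are Σ_a σ_a and Σ_a τ_a. -/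
open CategoryTheory Limits

universe w v u

namespace ExCompletion

variable {A : Type u'} [Category.{u'} A]

theorem ap_rs (Z : PseudoEqRel (Type u)) (z : Z.X0) : Z.s (Z.r z) = z := by
  simpa using ConcreteCategory.congr_hom Z.rs z
theorem ap_rt (Z : PseudoEqRel (Type u)) (z : Z.X0) : Z.t (Z.r z) = z := by
  simpa using ConcreteCategory.congr_hom Z.rt z

/-- Objects of the strictification `X̃_c` of a coherent diagram `X` of setoids. -/
inductive TObj (X : CohDiag (Type u) A) (c : A) : Type max u u'
  | tri {a : A} (α : a ⟶ c) (x : (X.obj a).X0) : TObj X c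
  | tup {a a' : A} (α : a ⟶ a') (x : (X.obj a).X0) (α' : a' ⟶ c) (x' : (X.obj a').X0)
      (ξ : (X.obj a').X1) (h1 : (X.obj a').s ξ = (X.map α).f0 x)
      (h2 : (X.obj a').t ξ = x') : TObj X c

/-- The (generating) morphisms of `X̃_c`. -/
inductive TRel (X : CohDiag (Type u) A) (c : A) : TObj X c → TObj X c → Prop
  | refl (o : TObj X c) : TRel X c o o
  | toSrc {a a' : A} (α : a ⟶ a') (x : (X.obj a).X0) (α' : a' ⟶ c) (x' : (X.obj a').X0)
      (ξ : (X.obj a').X1) (h1 : (X.obj a').s ξ = (X.map α).f0 x) (h2 : (X.obj a').t ξ = x') :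
      TRel X c (.tup α x α' x' ξ h1 h2) (.tri (α ≫ α') x)
  | toTgt {a a' : A} (α : a ⟶ a') (x : (X.obj a).X0) (α' : a' ⟶ c) (x' : (X.obj a').X0)
      (ξ : (X.obj a').X1) (h1 : (X.obj a').s ξ = (X.map α).f0 x) (h2 : (X.obj a').t ξ = x') :
      TRel X c (.tup α x α' x' ξ h1 h2) (.tri α' x')

theorem TRel.comp {X : CohDiag (Type u) A} {c : A} {o1 o2 o3 : TObj X c}
    (f : TRel X c o1 o2) (g : TRel X c o2 o3) : TRel X c o1 o3 := by
  cases g with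
  | refl _ => exact f
  | toSrc α x α' x' ξ h1 h2 => cases f; exact TRel.toSrc α x α' x' ξ h1 h2
  | toTgt α x α' x' ξ h1 h2 => cases f; exact TRel.toTgt α x α' x' ξ h1 h2

instance TObj.category (X : CohDiag (Type u) A) (c : A) : Category.{max u u'} (TObj X c) where
  Hom o1 o2 := ULift.{max u u'} (PLift (TRel X c o1 o2))
  id o := ⟨⟨TRel.refl o⟩⟩
  comp f g := ⟨⟨f.down.down.comp g.down.down⟩⟩
  id_comp _ := by apply congrArg ULift.up; rfl
  comp_id _ := by apply congrArg ULift.up; rfl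
  assoc _ _ _ := by apply congrArg ULift.up; rfl

/-- Objects of the path space `℘X̃_c`. -/
inductive PObj (X : CohDiag (Type u) A) (c : A) : Type max u u'
  | tri {a : A} (α : a ⟶ c) (ζ : (X.obj a).X1) : PObj X c
  | tup {a a' : A} (α : a ⟶ a') (ζ : (X.obj a).X1) (α' : a' ⟶ c) (ζ' : (X.obj a').X1)
      (ξ ξ' : (X.obj a').X1)
      (h1 : (X.obj a').s ξ = (X.map α).f0 ((X.obj a).s ζ))
      (h2 : (X.obj a').t ξ = (X.obj a').s ζ')
      (h3 : (X.obj a').s ξ' = (X.map α).f0 ((X.obj a).t ζ))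
      (h4 : (X.obj a').t ξ' = (X.obj a').t ζ') : PObj X c

/-- The (generating) morphisms of `℘X̃_c`. -/
inductive PRel (X : CohDiag (Type u) A) (c : A) : PObj X c → PObj X c → Prop
  | refl (o : PObj X c) : PRel X c o o
  | toSrc {a a' : A} (α : a ⟶ a') (ζ : (X.obj a).X1) (α' : a' ⟶ c) (ζ' : (X.obj a').X1)
      (ξ ξ' : (X.obj a').X1) (h1 : _) (h2 : _) (h3 : _) (h4 : _) :
      PRel X c (.tup α ζ α' ζ' ξ ξ' h1 h2 h3 h4) (.tri (α ≫ α') ζ)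
  | toTgt {a a' : A} (α : a ⟶ a') (ζ : (X.obj a).X1) (α' : a' ⟶ c) (ζ' : (X.obj a').X1)
      (ξ ξ' : (X.obj a').X1) (h1 : _) (h2 : _) (h3 : _) (h4 : _) :
      PRel X c (.tup α ζ α' ζ' ξ ξ' h1 h2 h3 h4) (.tri α' ζ')

theorem PRel.comp {X : CohDiag (Type u) A} {c : A} {o1 o2 o3 : PObj X c}
    (f : PRel X c o1 o2) (g : PRel X c o2 o3) : PRel X c o1 o3 := by
  cases g with
  | refl _ => exact f
  | toSrc α ζ α' ζ' ξ ξ' h1 h2 h3 h4 => cases f; exact PRel.toSrc α ζ α' ζ' ξ ξ' h1 h2 h3 h4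
  | toTgt α ζ α' ζ' ξ ξ' h1 h2 h3 h4 => cases f; exact PRel.toTgt α ζ α' ζ' ξ ξ' h1 h2 h3 h4

instance PObj.category (X : CohDiag (Type u) A) (c : A) : Category.{max u u'} (PObj X c) where
  Hom o1 o2 := ULift.{max u u'} (PLift (PRel X c o1 o2))
  id o := ⟨⟨PRel.refl o⟩⟩
  comp f g := ⟨⟨f.down.down.comp g.down.down⟩⟩
  id_comp _ := by apply congrArg ULift.up; rfl
  comp_id _ := by apply congrArg ULift.up; rfl
  assoc _ _ _ := by apply congrArg ULift.up; rfl

/-- The first projection `σ : ℘X̃ → X̃` on objects. -/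
def sObj {X : CohDiag (Type u) A} {c : A} : PObj X c → TObj X c
  | .tri α ζ => .tri α ((X.obj _).s ζ)
  | .tup α ζ α' ζ' ξ _ h1 h2 _ _ => .tup α ((X.obj _).s ζ) α' ((X.obj _).s ζ') ξ h1 h2

/-- The second projection `τ : ℘X̃ → X̃` on objects. -/
def tObj {X : CohDiag (Type u) A} {c : A} : PObj X c → TObj X c
  | .tri α ζ => .tri α ((X.obj _).t ζ)
  | .tup α ζ α' ζ' _ ξ' _ _ h3 h4 => .tup α ((X.obj _).t ζ) α' ((X.obj _).t ζ') ξ' h3 h4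

/-- The reflexivity section `ρ : X̃ → ℘X̃` on objects. -/
def rObj {X : CohDiag (Type u) A} {c : A} : TObj X c → PObj X c
  | .tri α x => .tri α ((X.obj _).r x)
  | .tup α x α' x' ξ h1 h2 =>
      .tup α ((X.obj _).r x) α' ((X.obj _).r x') ξ ξ
        (by rw [ap_rs]; exact h1) (by rw [ap_rs]; exact h2)
        (by rw [ap_rt]; exact h1) (by rw [ap_rt]; exact h2)

theorem sRel {X : CohDiag (Type u) A} {c : A} {o1 o2 : PObj X c} (f : PRel X c o1 o2) :
    TRel X c (sObj o1) (sObj o2) := by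
  cases f with
  | refl o => exact TRel.refl _
  | toSrc α ζ α' ζ' ξ ξ' h1 h2 h3 h4 => exact TRel.toSrc α _ α' _ ξ h1 h2
  | toTgt α ζ α' ζ' ξ ξ' h1 h2 h3 h4 => exact TRel.toTgt α _ α' _ ξ h1 h2

theorem tRel {X : CohDiag (Type u) A} {c : A} {o1 o2 : PObj X c} (f : PRel X c o1 o2) :
    TRel X c (tObj o1) (tObj o2) := by
  cases f with
  | refl o => exact TRel.refl _
  | toSrc α ζ α' ζ' ξ ξ' h1 h2 h3 h4 => exact TRel.toSrc α _ α' _ ξ' h3 h4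
  | toTgt α ζ α' ζ' ξ ξ' h1 h2 h3 h4 => exact TRel.toTgt α _ α' _ ξ' h3 h4

theorem rRel {X : CohDiag (Type u) A} {c : A} {o1 o2 : TObj X c} (f : TRel X c o1 o2) :
    PRel X c (rObj o1) (rObj o2) := by
  cases f with
  | refl o => exact PRel.refl _
  | toSrc α x α' x' ξ h1 h2 => exact PRel.toSrc α _ α' _ ξ ξ _ _ _ _
  | toTgt α x α' x' ξ h1 h2 => exact PRel.toTgt α _ α' _ ξ ξ _ _ _ _

/-- The functor `σ_c : ℘X̃_c ⥤ X̃_c`. -/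
def sFun (X : CohDiag (Type u) A) (c : A) : PObj X c ⥤ TObj X c where
  obj := sObj
  map f := ⟨⟨sRel f.down.down⟩⟩
  map_id _ := by apply congrArg ULift.up; rfl
  map_comp _ _ := by apply congrArg ULift.up; rfl

/-- The functor `τ_c : ℘X̃_c ⥤ X̃_c`. -/
def tFun (X : CohDiag (Type u) A) (c : A) : PObj X c ⥤ TObj X c where
  obj := tObj
  map f := ⟨⟨tRel f.down.down⟩⟩
  map_id _ := by apply congrArg ULift.up; rfl
  map_comp _ _ := by apply congrArg ULift.up; rfl

/-- The functor `ρ_c : X̃_c ⥤ ℘X̃_c`. -/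
def rFun (X : CohDiag (Type u) A) (c : A) : TObj X c ⥤ PObj X c where
  obj := rObj
  map f := ⟨⟨rRel f.down.down⟩⟩
  map_id _ := by apply congrArg ULift.up; rfl
  map_comp _ _ := by apply congrArg ULift.up; rfl

end ExCompletion

namespace ExCompletion

variable {A : Type u'} [Category.{u'} A]

/-- The projection of the total category of the strictification to the discrete
category of objects of `A`. -/
def projT (X : CohDiag (Type u') A) : (Σ c : A, TObj X c) ⥤ Discrete A :=
  CategoryTheory.Sigma.desc fun c => (Functor.const (TObj X c)).obj ⟨c⟩

/-- The projection of the total category of the path space to the discrete category of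
objects of `A`. -/
def projP (X : CohDiag (Type u') A) : (Σ c : A, PObj X c) ⥤ Discrete A :=
  CategoryTheory.Sigma.desc fun c => (Functor.const (PObj X c)).obj ⟨c⟩

end ExCompletion


namespace ExCompletion

variable {A : Type u'} [Category.{u'} A]

/-! ### Pointwise lemmas for pseudo-equivalence relations in `Type` -/

theorem ap_vs (Z : PseudoEqRel (Type u)) (z : Z.X1) : Z.s (Z.v z) = Z.t z := by simpa using ConcreteCategory.congr_hom Z.vs z
theorem ap_vt (Z : PseudoEqRel (Type u)) (z : Z.X1) : Z.t (Z.v z) = Z.s z := by simpa using ConcreteCategory.congr_hom Z.vt z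

theorem ap_hs {Z W : PseudoEqRel (Type u)} (f : Rep Z W) (z : Z.X1) :
    W.s (f.f1 z) = f.f0 (Z.s z) := by simpa using ConcreteCategory.congr_hom f.hs z

theorem ap_ht {Z W : PseudoEqRel (Type u)} (f : Rep Z W) (z : Z.X1) :
    W.t (f.f1 z) = f.f0 (Z.t z) := by simpa using ConcreteCategory.congr_hom f.ht z

theorem ap_wids (X : CohDiag (Type u) A) (a : A) (x : (X.obj a).X0) :
    (X.obj a).s (X.wid a x) = x := by simpa using ConcreteCategory.congr_hom (X.wid_s a) x

theorem ap_widt (X : CohDiag (Type u) A) (a : A) (x : (X.obj a).X0) :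
    (X.obj a).t (X.wid a x) = (X.map (𝟙 a)).f0 x := by simpa using ConcreteCategory.congr_hom (X.wid_t a) x

/-- Composition of two witnesses of relatedness, pointwise in `Type`. -/
noncomputable def tcomp (Z : PseudoEqRel (Type u)) (x y : Z.X1) (h : Z.t x = Z.s y) : Z.X1 :=
  Z.m (pullback.lift (f := Z.t) (g := Z.s) (TypeCat.ofHom (fun _ : PUnit.{u + 1} => x)) (TypeCat.ofHom (fun _ => y))
    (by ext; exact h) PUnit.unit)

theorem tcomp_s (Z : PseudoEqRel (Type u)) (x y : Z.X1) (h : Z.t x = Z.s y) :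
    Z.s (tcomp Z x y h) = Z.s x := by
  have h1 := ConcreteCategory.congr_hom Z.ms (pullback.lift (f := Z.t) (g := Z.s)
    (TypeCat.ofHom (fun _ : PUnit.{u + 1} => x)) (TypeCat.ofHom (fun _ => y)) (by ext; exact h) PUnit.unit)
  have h2 := ConcreteCategory.congr_hom (pullback.lift_fst (f := Z.t) (g := Z.s)
    (TypeCat.ofHom (fun _ : PUnit.{u + 1} => x)) (TypeCat.ofHom (fun _ => y)) (by ext; exact h)) PUnit.unit
  exact h1.trans (congrArg Z.s h2)

theorem tcomp_t (Z : PseudoEqRel (Type u)) (x y : Z.X1) (h : Z.t x = Z.s y) :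
    Z.t (tcomp Z x y h) = Z.t y := by
  have h1 := ConcreteCategory.congr_hom Z.mt (pullback.lift (f := Z.t) (g := Z.s)
    (TypeCat.ofHom (fun _ : PUnit.{u + 1} => x)) (TypeCat.ofHom (fun _ => y)) (by ext; exact h) PUnit.unit)
  have h2 := ConcreteCategory.congr_hom (pullback.lift_snd (f := Z.t) (g := Z.s)
    (TypeCat.ofHom (fun _ : PUnit.{u + 1} => x)) (TypeCat.ofHom (fun _ => y)) (by ext; exact h)) PUnit.unit
  exact h1.trans (congrArg Z.t h2)

/-! ### Homotopy of representatives -/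

/-- The basic step: two representatives connected by naturality-type data are related. -/
theorem rel_step {Z W : PseudoEqRel (Type u)} {mD : Z.X0 → Z.X0} {mE : W.X0 → W.X0}
    (widZ : Z.X0 → Z.X1) (hZs : ∀ x, Z.s (widZ x) = x) (hZt : ∀ x, Z.t (widZ x) = mD x)
    (widW : W.X0 → W.X1) (hWs : ∀ y, W.s (widW y) = y) (hWt : ∀ y, W.t (widW y) = mE y)
    (f g : Rep Z W) (n : Z.X0 → W.X1)
    (ns : ∀ x, W.s (n x) = mE (f.f0 x)) (nt : ∀ x, W.t (n x) = g.f0 (mD x)) :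
    RepRel f g := by
  refine ⟨TypeCat.ofHom fun x => tcomp W (tcomp W (widW (f.f0 x)) (n x) (by rw [hWt, ns]))
    (W.v (g.f1 (widZ x))) (by rw [tcomp_t, nt, ap_vs, ap_ht, hZt]), ?_, ?_⟩
  · ext x
    exact (tcomp_s W _ _ (by rw [tcomp_t, nt, ap_vs, ap_ht, hZt])).trans ((tcomp_s W _ _ _).trans (hWs _))
  · ext x
    show W.t (tcomp W _ _ (by rw [tcomp_t, nt, ap_vs, ap_ht, hZt])) = g.f0 x
    rw [tcomp_t, ap_vt, ap_hs, hZs]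

theorem repRel_eqvGen {Z W : PseudoEqRel (Type u)} {ι : Type w} (app : ι → Rep Z W)
    (r : ι → ι → Prop) (hstep : ∀ p q, r p q → RepRel (app p) (app q))
    {p q : ι} (h : Relation.EqvGen r p q) : RepRel (app p) (app q) := by
  induction h with
  | rel _ _ h => exact hstep _ _ h
  | refl _ => exact (repRel_equivalence Z W).refl _
  | symm _ _ _ ih => exact (repRel_equivalence Z W).symm ih
  | trans _ _ _ _ _ ih1 ih2 => exact (repRel_equivalence Z W).trans ih1 ih2

theorem map_f0_congr_ap (Eo : CohDiag (Type u) (Discrete A)) {i j : Discrete A}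
    (e e' : i ⟶ j) (y : (Eo.obj i).X0) : (Eo.map e).f0 y = (Eo.map e').f0 y := by
  rw [Subsingleton.elim e e']

theorem comp_map_f0_congr (Eo : CohDiag (Type u) (Discrete A)) {i j : Discrete A}
    (e e' : i ⟶ j) {T : Type u} (k : T ⟶ (Eo.obj i).X0) :
    k ≫ (Eo.map e).f0 = k ≫ (Eo.map e').f0 := by
  rw [Subsingleton.elim e e']

theorem map_f0_comp_congr (Do : CohDiag (Type u) (Discrete A)) {i j : Discrete A}
    (e e' : i ⟶ j) {T : Type u} (k : (Do.obj j).X0 ⟶ T) :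
    (Do.map e).f0 ≫ k = (Do.map e').f0 ≫ k := by
  rw [Subsingleton.elim e e']

theorem cohRel_of_pointwise_s19 {B : Type u'} [Category.{u'} B]
    {Xd Yd : CohDiag (Type u) B} {f g : CohRep Xd Yd}
    (h : ∀ a, RepRel (f.app a) (g.app a)) : CohRel f g := by
  choose k hk1 hk2 using h
  exact ⟨k, fun a => ⟨hk1 a, hk2 a⟩⟩

/-! ### `σ ∘ ρ = id` and `τ ∘ ρ = id` on objects -/

theorem tup_congr {X : CohDiag (Type u) A} {c a a' : A} (α : a ⟶ a') {x y : (X.obj a).X0}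
    (e : x = y) (α' : a' ⟶ c) {x' y' : (X.obj a').X0} (e' : x' = y') (ξ : (X.obj a').X1)
    {h1 h2 h1' h2'} :
    (TObj.tup α x α' x' ξ h1 h2 : TObj X c) = TObj.tup α y α' y' ξ h1' h2' := by
  subst e; subst e'; rfl

theorem sObj_rObj {X : CohDiag (Type u) A} {c : A} (o : TObj X c) : sObj (rObj o) = o := by
  cases o with
  | tri α x =>
    show TObj.tri α ((X.obj _).s ((X.obj _).r x)) = TObj.tri α x
    rw [ap_rs]
  | tup α x α' x' ξ h1 h2 => exact tup_congr α (ap_rs _ x) α' (ap_rs _ x') ξ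

theorem tObj_rObj {X : CohDiag (Type u) A} {c : A} (o : TObj X c) : tObj (rObj o) = o := by
  cases o with
  | tri α x =>
    show TObj.tri α ((X.obj _).t ((X.obj _).r x)) = TObj.tri α x
    rw [ap_rt]
  | tup α x α' x' ξ h1 h2 => exact tup_congr α (ap_rt _ x) α' (ap_rt _ x') ξ

instance tobjHomSub {X : CohDiag (Type u) A} {c : A} (o1 o2 : TObj X c) :
    Subsingleton (o1 ⟶ o2) :=
  ⟨fun a b => by obtain ⟨⟨_⟩⟩ := a; obtain ⟨⟨_⟩⟩ := b; rfl⟩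

instance pobjHomSub {X : CohDiag (Type u) A} {c : A} (o1 o2 : PObj X c) :
    Subsingleton (o1 ⟶ o2) :=
  ⟨fun a b => by obtain ⟨⟨_⟩⟩ := a; obtain ⟨⟨_⟩⟩ := b; rfl⟩

/-! ### Connectivity in the path space -/

theorem conn_s_tri (X : CohDiag (Type u') A) {c a : A} (α : a ⟶ c) (ζ : (X.obj a).X1) :
    Relation.EqvGen (PRel X c)
      (PObj.tri α ((X.obj a).r ((X.obj a).s ζ))) (PObj.tri α ζ) := by
  have e0 : (X.obj a).t ((X.obj a).v (X.wid a ((X.obj a).s ζ))) = (X.obj a).s ζ := by rw [ap_vt, ap_wids]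
  have k1 : (X.obj a).s ((X.obj a).v (X.wid a ((X.obj a).s ζ))) = (X.map (𝟙 a)).f0 ((X.obj a).s ((X.obj a).r ((X.obj a).s ζ))) := by
    rw [ap_vs, ap_widt, ap_rs]
  have k3 : (X.obj a).s (tcomp (X.obj a) ((X.obj a).v (X.wid a ((X.obj a).s ζ))) ζ e0)
      = (X.map (𝟙 a)).f0 ((X.obj a).t ((X.obj a).r ((X.obj a).s ζ))) := by
    rw [tcomp_s, ap_vs, ap_widt, ap_rt]
  have k4 : (X.obj a).t (tcomp (X.obj a) ((X.obj a).v (X.wid a ((X.obj a).s ζ))) ζ e0) = (X.obj a).t ζ := tcomp_t (X.obj a) _ _ _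
  have m1 : PRel X c
      (PObj.tup (𝟙 a) ((X.obj a).r ((X.obj a).s ζ)) α ζ ((X.obj a).v (X.wid a ((X.obj a).s ζ)))
        (tcomp (X.obj a) ((X.obj a).v (X.wid a ((X.obj a).s ζ))) ζ e0) k1 e0 k3 k4)
      (PObj.tri (𝟙 a ≫ α) ((X.obj a).r ((X.obj a).s ζ))) := PRel.toSrc _ _ _ _ _ _ _ _ _ _
  have m2 : PRel X c
      (PObj.tup (𝟙 a) ((X.obj a).r ((X.obj a).s ζ)) α ζ ((X.obj a).v (X.wid a ((X.obj a).s ζ)))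
        (tcomp (X.obj a) ((X.obj a).v (X.wid a ((X.obj a).s ζ))) ζ e0) k1 e0 k3 k4)
      (PObj.tri α ζ) := PRel.toTgt _ _ _ _ _ _ _ _ _ _
  have h1 : Relation.EqvGen (PRel X c)
      (PObj.tup (𝟙 a) ((X.obj a).r ((X.obj a).s ζ)) α ζ ((X.obj a).v (X.wid a ((X.obj a).s ζ)))
        (tcomp (X.obj a) ((X.obj a).v (X.wid a ((X.obj a).s ζ))) ζ e0) k1 e0 k3 k4)
      (PObj.tri α ((X.obj a).r ((X.obj a).s ζ))) := by
    have e5 : (PObj.tri (𝟙 a ≫ α) ((X.obj a).r ((X.obj a).s ζ)) : PObj X c)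
        = PObj.tri α ((X.obj a).r ((X.obj a).s ζ)) := by rw [Category.id_comp]
    rw [← e5]
    exact Relation.EqvGen.rel _ _ m1
  exact Relation.EqvGen.trans _ _ _ (Relation.EqvGen.symm _ _ h1) (Relation.EqvGen.rel _ _ m2)

theorem conn_t_tri (X : CohDiag (Type u') A) {c a : A} (α : a ⟶ c) (ζ : (X.obj a).X1) :
    Relation.EqvGen (PRel X c)
      (PObj.tri α ((X.obj a).r ((X.obj a).t ζ))) (PObj.tri α ζ) := by
  have e0 : (X.obj a).t ((X.obj a).v (X.wid a ((X.obj a).t ζ))) = (X.obj a).s ((X.obj a).v ζ) := by rw [ap_vt, ap_wids, ap_vs]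
  have k1 : (X.obj a).s (tcomp (X.obj a) ((X.obj a).v (X.wid a ((X.obj a).t ζ))) ((X.obj a).v ζ) e0)
      = (X.map (𝟙 a)).f0 ((X.obj a).s ((X.obj a).r ((X.obj a).t ζ))) := by
    rw [tcomp_s, ap_vs, ap_widt, ap_rs]
  have k2 : (X.obj a).t (tcomp (X.obj a) ((X.obj a).v (X.wid a ((X.obj a).t ζ))) ((X.obj a).v ζ) e0) = (X.obj a).s ζ := by
    rw [tcomp_t, ap_vt]
  have k3 : (X.obj a).s ((X.obj a).v (X.wid a ((X.obj a).t ζ))) = (X.map (𝟙 a)).f0 ((X.obj a).t ((X.obj a).r ((X.obj a).t ζ))) := by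
    rw [ap_vs, ap_widt, ap_rt]
  have k4 : (X.obj a).t ((X.obj a).v (X.wid a ((X.obj a).t ζ))) = (X.obj a).t ζ := by rw [ap_vt, ap_wids]
  have m1 : PRel X c
      (PObj.tup (𝟙 a) ((X.obj a).r ((X.obj a).t ζ)) α ζ (tcomp (X.obj a) ((X.obj a).v (X.wid a ((X.obj a).t ζ))) ((X.obj a).v ζ) e0)
        ((X.obj a).v (X.wid a ((X.obj a).t ζ))) k1 k2 k3 k4)
      (PObj.tri (𝟙 a ≫ α) ((X.obj a).r ((X.obj a).t ζ))) := PRel.toSrc _ _ _ _ _ _ _ _ _ _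
  have m2 : PRel X c
      (PObj.tup (𝟙 a) ((X.obj a).r ((X.obj a).t ζ)) α ζ (tcomp (X.obj a) ((X.obj a).v (X.wid a ((X.obj a).t ζ))) ((X.obj a).v ζ) e0)
        ((X.obj a).v (X.wid a ((X.obj a).t ζ))) k1 k2 k3 k4)
      (PObj.tri α ζ) := PRel.toTgt _ _ _ _ _ _ _ _ _ _
  have h1 : Relation.EqvGen (PRel X c)
      (PObj.tup (𝟙 a) ((X.obj a).r ((X.obj a).t ζ)) α ζ (tcomp (X.obj a) ((X.obj a).v (X.wid a ((X.obj a).t ζ))) ((X.obj a).v ζ) e0)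
        ((X.obj a).v (X.wid a ((X.obj a).t ζ))) k1 k2 k3 k4)
      (PObj.tri α ((X.obj a).r ((X.obj a).t ζ))) := by
    have e5 : (PObj.tri (𝟙 a ≫ α) ((X.obj a).r ((X.obj a).t ζ)) : PObj X c)
        = PObj.tri α ((X.obj a).r ((X.obj a).t ζ)) := by rw [Category.id_comp]
    rw [← e5]
    exact Relation.EqvGen.rel _ _ m1
  exact Relation.EqvGen.trans _ _ _ (Relation.EqvGen.symm _ _ h1) (Relation.EqvGen.rel _ _ m2)

theorem conn_s (X : CohDiag (Type u') A) {c : A} (p : PObj X c) :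
    Relation.EqvGen (PRel X c) (rObj (sObj p)) p := by
  cases p with
  | tri α ζ => exact conn_s_tri X α ζ
  | tup α ζ α' ζ' ξ ξ'' h1 h2 h3 h4 =>
    exact Relation.EqvGen.trans _ _ _
      (Relation.EqvGen.rel _ _ (PRel.toTgt _ _ _ _ _ _ _ _ _ _))
      (Relation.EqvGen.trans _ _ _ (conn_s_tri X α' ζ')
        (Relation.EqvGen.symm _ _
          (Relation.EqvGen.rel _ _ (PRel.toTgt _ _ _ _ _ _ _ _ _ _))))

theorem conn_t (X : CohDiag (Type u') A) {c : A} (p : PObj X c) :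
    Relation.EqvGen (PRel X c) (rObj (tObj p)) p := by
  cases p with
  | tri α ζ => exact conn_t_tri X α ζ
  | tup α ζ α' ζ' ξ ξ'' h1 h2 h3 h4 =>
    exact Relation.EqvGen.trans _ _ _
      (Relation.EqvGen.rel _ _ (PRel.toTgt _ _ _ _ _ _ _ _ _ _))
      (Relation.EqvGen.trans _ _ _ (conn_t_tri X α' ζ')
        (Relation.EqvGen.symm _ _
          (Relation.EqvGen.rel _ _ (PRel.toTgt _ _ _ _ _ _ _ _ _ _))))

end ExCompletion

open ExCompletion in
/-- In the derivator `Set_ex`, for the path space `℘X̃` of the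
strictification `X̃` of a coherent diagram `X`, the reflexivity section `ρ : X̃ → ℘X̃`
satisfies `σ ∘ ρ = τ ∘ ρ = id`, and the coproduct over objects `Σ_a ρ_a` is a
`Set_ex`-equivalence over `ob A`; hence so are `Σ_a σ_a` and `Σ_a τ_a`. -/
theorem pathSpace_section_is_setExEquiv
    {A : Type u'} [Category.{u'} A] (X : CohDiag (Type u') A) :
    (∀ c : A, rFun X c ⋙ sFun X c = 𝟭 (TObj X c)) ∧
    (∀ c : A, rFun X c ⋙ tFun X c = 𝟭 (TObj X c)) ∧
    IsSetExEquiv (CategoryTheory.Sigma.desc fun c => rFun X c ⋙ Sigma.incl c) (projP X) ∧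
    IsSetExEquiv (CategoryTheory.Sigma.desc fun c => sFun X c ⋙ Sigma.incl c) (projT X) ∧
    IsSetExEquiv (CategoryTheory.Sigma.desc fun c => tFun X c ⋙ Sigma.incl c) (projT X) := by
    classical
  have re := fun (Z W : PseudoEqRel (Type u')) => repRel_equivalence Z W
  refine ⟨?_, ?_, ?_, ?_, ?_⟩
  · intro c
    refine CategoryTheory.Functor.ext (fun o => sObj_rObj o) (fun o o' f => Subsingleton.elim _ _)
  · intro c
    refine CategoryTheory.Functor.ext (fun o => tObj_rObj o) (fun o o' f => Subsingleton.elim _ _)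
  · -- ρ
    intro D E
    constructor
    · intro g1 g2 h
      induction g1 using Quotient.inductionOn with | h g1 => ?_
      induction g2 using Quotient.inductionOn with | h g2 => ?_
      obtain ⟨hh, hc⟩ := Quotient.exact h
      refine Quotient.sound (cohRel_of_pointwise_s19 ?_)
      rintro ⟨c, p⟩
      have key : ∀ (g : CohRep (D.restrict (projP X)) (E.restrict (projP X)))
          (p q : PObj X c), PRel X c p q → RepRel (g.app ⟨c, p⟩) (g.app ⟨c, q⟩) := by
        intro g p q hpq
        have mor : (⟨c, p⟩ : Σ c, PObj X c) ⟶ ⟨c, q⟩ := Sigma.SigmaHom.mk ⟨⟨hpq⟩⟩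
        refine rel_step (mD := (D.map ((projP X).map mor)).f0)
          (mE := (E.map ((projP X).map mor)).f0)
          (D.wid ⟨c⟩) (fun x => ConcreteCategory.congr_hom (D.wid_s ⟨c⟩) x)
          (fun x => (ConcreteCategory.congr_hom (D.wid_t ⟨c⟩) x).trans (map_f0_congr_ap D _ _ x))
          (E.wid ⟨c⟩) (fun y => ConcreteCategory.congr_hom (E.wid_s ⟨c⟩) y)
          (fun y => (ConcreteCategory.congr_hom (E.wid_t ⟨c⟩) y).trans (map_f0_congr_ap E _ _ y))
          (g.app ⟨c, p⟩) (g.app ⟨c, q⟩) (g.nat (a := ⟨c, p⟩) (a' := ⟨c, q⟩) mor)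
          (fun x => ConcreteCategory.congr_hom (g.nat_s mor) x) (fun x => ConcreteCategory.congr_hom (g.nat_t mor) x)
      have key2 : ∀ (g : CohRep (D.restrict (projP X)) (E.restrict (projP X)))
          (p q : PObj X c), Relation.EqvGen (PRel X c) p q →
          RepRel (g.app ⟨c, p⟩) (g.app ⟨c, q⟩) := by
        intro g p q h
        have key := key g
        induction h with
        | rel _ _ h => exact key _ _ h
        | refl _ => exact (re _ _).refl _
        | symm _ _ _ ih => exact (re _ _).symm ih
        | trans _ _ _ _ _ ih1 ih2 => exact (re _ _).trans ih1 ih2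
      have zig : ∀ g : CohRep (D.restrict (projP X)) (E.restrict (projP X)),
          RepRel (g.app ⟨c, p⟩) (g.app ⟨c, rObj (sObj p)⟩) := fun g =>
        key2 g _ _ (Relation.EqvGen.symm _ _ (conn_s X p))
      have mid : RepRel (g1.app ⟨c, rObj (sObj p)⟩) (g2.app ⟨c, rObj (sObj p)⟩) :=
        ⟨hh ⟨c, sObj p⟩, (hc ⟨c, sObj p⟩).1, (hc ⟨c, sObj p⟩).2⟩
      exact (re _ _).trans (zig g1) ((re _ _).trans mid ((re _ _).symm (zig g2)))
    · intro f
      induction f using Quotient.inductionOn with | h f => ?_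
      refine ⟨Quotient.mk _
        { app := fun a => f.app ⟨a.1, sObj a.2⟩
          nat := fun {a a'} m =>
            f.nat ((CategoryTheory.Sigma.desc fun c => sFun X c ⋙ Sigma.incl c).map m)
          nat_s := fun {a a'} m => (f.nat_s _).trans (comp_map_f0_congr E _ _ _)
          nat_t := fun {a a'} m => (f.nat_t _).trans (map_f0_comp_congr D _ _ _) }, ?_⟩
      refine Quotient.sound (cohRel_of_pointwise_s19 ?_)
      rintro ⟨c, o⟩
      show RepRel (f.app ⟨c, sObj (rObj o)⟩) (f.app ⟨c, o⟩)
      rw [sObj_rObj]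
      exact (re _ _).refl _
  · -- σ
    intro D E
    constructor
    · intro g1 g2 h
      induction g1 using Quotient.inductionOn with | h g1 => ?_
      induction g2 using Quotient.inductionOn with | h g2 => ?_
      obtain ⟨hh, hc⟩ := Quotient.exact h
      refine Quotient.sound (cohRel_of_pointwise_s19 ?_)
      rintro ⟨c, o⟩
      have mid : RepRel (g1.app ⟨c, sObj (rObj o)⟩) (g2.app ⟨c, sObj (rObj o)⟩) :=
        ⟨hh ⟨c, rObj o⟩, (hc ⟨c, rObj o⟩).1, (hc ⟨c, rObj o⟩).2⟩
      rwa [sObj_rObj] at mid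
    · intro f
      induction f using Quotient.inductionOn with | h f => ?_
      refine ⟨Quotient.mk _
        { app := fun a => f.app ⟨a.1, rObj a.2⟩
          nat := fun {a a'} m =>
            f.nat ((CategoryTheory.Sigma.desc fun c => rFun X c ⋙ Sigma.incl c).map m)
          nat_s := fun {a a'} m => (f.nat_s _).trans (comp_map_f0_congr E _ _ _)
          nat_t := fun {a a'} m => (f.nat_t _).trans (map_f0_comp_congr D _ _ _) }, ?_⟩
      refine Quotient.sound (cohRel_of_pointwise_s19 ?_)
      rintro ⟨c, p⟩
      show RepRel (f.app ⟨c, rObj (sObj p)⟩) (f.app ⟨c, p⟩)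
      have key : ∀ (p q : PObj X c), PRel X c p q →
          RepRel (f.app ⟨c, p⟩) (f.app ⟨c, q⟩) := by
        intro p q hpq
        have mor : (⟨c, p⟩ : Σ c, PObj X c) ⟶ ⟨c, q⟩ := Sigma.SigmaHom.mk ⟨⟨hpq⟩⟩
        refine rel_step
          (mD := (D.map ((projT X).map
            ((CategoryTheory.Sigma.desc fun c => sFun X c ⋙ Sigma.incl c).map mor))).f0)
          (mE := (E.map ((projT X).map
            ((CategoryTheory.Sigma.desc fun c => sFun X c ⋙ Sigma.incl c).map mor))).f0)
          (D.wid ⟨c⟩) (fun x => ConcreteCategory.congr_hom (D.wid_s ⟨c⟩) x)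
          (fun x => (ConcreteCategory.congr_hom (D.wid_t ⟨c⟩) x).trans (map_f0_congr_ap D _ _ x))
          (E.wid ⟨c⟩) (fun y => ConcreteCategory.congr_hom (E.wid_s ⟨c⟩) y)
          (fun y => (ConcreteCategory.congr_hom (E.wid_t ⟨c⟩) y).trans (map_f0_congr_ap E _ _ y))
          (f.app ⟨c, p⟩) (f.app ⟨c, q⟩) (f.nat (a := ⟨c, p⟩) (a' := ⟨c, q⟩) mor)
          (fun x => ConcreteCategory.congr_hom (f.nat_s mor) x) (fun x => ConcreteCategory.congr_hom (f.nat_t mor) x)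
      have key2 : ∀ p q : PObj X c, Relation.EqvGen (PRel X c) p q →
          RepRel (f.app ⟨c, p⟩) (f.app ⟨c, q⟩) := by
        intro p q h
        induction h with
        | rel _ _ h => exact key _ _ h
        | refl _ => exact (re _ _).refl _
        | symm _ _ _ ih => exact (re _ _).symm ih
        | trans _ _ _ _ _ ih1 ih2 => exact (re _ _).trans ih1 ih2
      exact key2 _ _ (conn_s X p)
  · -- τ
    intro D E
    constructor
    · intro g1 g2 h
      induction g1 using Quotient.inductionOn with | h g1 => ?_
      induction g2 using Quotient.inductionOn with | h g2 => ?_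
      obtain ⟨hh, hc⟩ := Quotient.exact h
      refine Quotient.sound (cohRel_of_pointwise_s19 ?_)
      rintro ⟨c, o⟩
      have mid : RepRel (g1.app ⟨c, tObj (rObj o)⟩) (g2.app ⟨c, tObj (rObj o)⟩) :=
        ⟨hh ⟨c, rObj o⟩, (hc ⟨c, rObj o⟩).1, (hc ⟨c, rObj o⟩).2⟩
      rwa [tObj_rObj] at mid
    · intro f
      induction f using Quotient.inductionOn with | h f => ?_
      refine ⟨Quotient.mk _
        { app := fun a => f.app ⟨a.1, rObj a.2⟩
          nat := fun {a a'} m =>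
            f.nat ((CategoryTheory.Sigma.desc fun c => rFun X c ⋙ Sigma.incl c).map m)
          nat_s := fun {a a'} m => (f.nat_s _).trans (comp_map_f0_congr E _ _ _)
          nat_t := fun {a a'} m => (f.nat_t _).trans (map_f0_comp_congr D _ _ _) }, ?_⟩
      refine Quotient.sound (cohRel_of_pointwise_s19 ?_)
      rintro ⟨c, p⟩
      show RepRel (f.app ⟨c, rObj (tObj p)⟩) (f.app ⟨c, p⟩)
      have key : ∀ (p q : PObj X c), PRel X c p q →
          RepRel (f.app ⟨c, p⟩) (f.app ⟨c, q⟩) := by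
        intro p q hpq
        have mor : (⟨c, p⟩ : Σ c, PObj X c) ⟶ ⟨c, q⟩ := Sigma.SigmaHom.mk ⟨⟨hpq⟩⟩
        refine rel_step
          (mD := (D.map ((projT X).map
            ((CategoryTheory.Sigma.desc fun c => tFun X c ⋙ Sigma.incl c).map mor))).f0)
          (mE := (E.map ((projT X).map
            ((CategoryTheory.Sigma.desc fun c => tFun X c ⋙ Sigma.incl c).map mor))).f0)
          (D.wid ⟨c⟩) (fun x => ConcreteCategory.congr_hom (D.wid_s ⟨c⟩) x)
          (fun x => (ConcreteCategory.congr_hom (D.wid_t ⟨c⟩) x).trans (map_f0_congr_ap D _ _ x))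
          (E.wid ⟨c⟩) (fun y => ConcreteCategory.congr_hom (E.wid_s ⟨c⟩) y)
          (fun y => (ConcreteCategory.congr_hom (E.wid_t ⟨c⟩) y).trans (map_f0_congr_ap E _ _ y))
          (f.app ⟨c, p⟩) (f.app ⟨c, q⟩) (f.nat (a := ⟨c, p⟩) (a' := ⟨c, q⟩) mor)
          (fun x => ConcreteCategory.congr_hom (f.nat_s mor) x) (fun x => ConcreteCategory.congr_hom (f.nat_t mor) x)
      have key2 : ∀ p q : PObj X c, Relation.EqvGen (PRel X c) p q →
          RepRel (f.app ⟨c, p⟩) (f.app ⟨c, q⟩) := by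
        intro p q h
        induction h with
        | rel _ _ h => exact key _ _ h
        | refl _ => exact (re _ _).refl _
        | symm _ _ _ ih => exact (re _ _).symm ih
        | trans _ _ _ _ _ ih1 ih2 => exact (re _ _).trans ih1 ih2
      exact key2 _ _ (conn_t X p)
end
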